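/- arXiv:1906.02326 — 3 statements merged into one kernel-verified Lean document; each statement's English description precedes it below -/
import Mathlib

section
/- If Z : G → G satisfies Z(0)=0, the Hammerstein property (Z(f₁+f+f₂) = Z(f₁+f) − Z(f) + Z(f₂+f) whenever f₁ ⊣ f₂), and the causality-preservation property (f₁ ⊣ f₂ implies Z_f(f₁) ⊣ f₂ and f₁ ⊣ Z_f(f₂), where Z_f(g) := Z(f+g) − Z(f)), and S : G → U is a generalized local S-matrix (S(0)=1 and S(f₁+f+f₂) = S(f₂+f)·S(f)⁻¹·S(f+f₁) whenever f₁ ⊣ f₂), then S ∘ Z is again a generalized local S-matrix. -/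
/-- If Z is a renormalization map and S a generalized local S-matrix, then
S ∘ Z is again a generalized local S-matrix. -/
theorem S_comp_Z_is_S_matrix {G U : Type*} [AddCommGroup G] [Group U]
    (r : G → G → Prop) (Z : G → G) (S : G → U)
    (hZ0 : Z 0 = 0)
    (hZcaus : ∀ f f₁ f₂ : G, r f₁ f₂ →
      r (Z (f + f₁) - Z f) f₂ ∧ r f₁ (Z (f + f₂) - Z f))
    (hZH : ∀ f₁ f f₂ : G, r f₁ f₂ →
      Z (f₁ + f + f₂) = Z (f₁ + f) - Z f + Z (f₂ + f))
    (hS0 : S 0 = 1)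
    (hSH : ∀ f₁ f f₂ : G, r f₁ f₂ →
      S (f₁ + f + f₂) = S (f₂ + f) * (S f)⁻¹ * S (f + f₁)) :
    (S ∘ Z) 0 = 1 ∧ ∀ f₁ f f₂ : G, r f₁ f₂ →
      (S ∘ Z) (f₁ + f + f₂) = (S ∘ Z) (f₂ + f) * ((S ∘ Z) f)⁻¹ * (S ∘ Z) (f + f₁) := by
  refine ⟨by simp [hZ0, hS0], ?_⟩
  intro f₁ f f₂ h
  have ha : r (Z (f + f₁) - Z f) f₂ := (hZcaus f f₁ f₂ h).1
  have hab : r (Z (f + f₁) - Z f) (Z (f + f₂) - Z f) :=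
    (hZcaus f (Z (f + f₁) - Z f) f₂ ha).2
  have key := hSH (Z (f + f₁) - Z f) (Z f) (Z (f + f₂) - Z f) hab
  have hZeq : Z (f₁ + f + f₂) = (Z (f + f₁) - Z f) + Z f + (Z (f + f₂) - Z f) := by
    rw [hZH f₁ f f₂ h, add_comm f₁ f, add_comm f₂ f]; abel
  have e1 : Z (f + f₂) - Z f + Z f = Z (f + f₂) := by abel
  have e2 : Z f + (Z (f + f₁) - Z f) = Z (f + f₁) := by abel
  simp only [Function.comp_apply]
  rw [hZeq, key, e1, e2, add_comm f₂ f]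
end

section
/- The composition of two renormalization maps is a renormalization map: if Z₁, Z₂ : G → G each satisfy Z(0)=0, the additive Hammerstein property with respect to ⊣, and causality preservation (f₁ ⊣ f₂ implies Z_f(f₁) ⊣ f₂ and f₁ ⊣ Z_f(f₂) for all f), then so does Z₁ ∘ Z₂. -/
/-- The composition of two renormalization maps is a renormalization map. -/
theorem renormalization_comp {G : Type*} [AddCommGroup G] (r : G → G → Prop)
    (Z₁ Z₂ : G → G)
    (hZ₁0 : Z₁ 0 = 0)
    (hZ₁caus : ∀ f f₁ f₂ : G, r f₁ f₂ →
      r (Z₁ (f + f₁) - Z₁ f) f₂ ∧ r f₁ (Z₁ (f + f₂) - Z₁ f))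
    (hZ₁H : ∀ f₁ f f₂ : G, r f₁ f₂ →
      Z₁ (f₁ + f + f₂) = Z₁ (f₁ + f) - Z₁ f + Z₁ (f₂ + f))
    (hZ₂0 : Z₂ 0 = 0)
    (hZ₂caus : ∀ f f₁ f₂ : G, r f₁ f₂ →
      r (Z₂ (f + f₁) - Z₂ f) f₂ ∧ r f₁ (Z₂ (f + f₂) - Z₂ f))
    (hZ₂H : ∀ f₁ f f₂ : G, r f₁ f₂ →
      Z₂ (f₁ + f + f₂) = Z₂ (f₁ + f) - Z₂ f + Z₂ (f₂ + f)) :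
    (Z₁ ∘ Z₂) 0 = 0 ∧
    (∀ f f₁ f₂ : G, r f₁ f₂ →
      r ((Z₁ ∘ Z₂) (f + f₁) - (Z₁ ∘ Z₂) f) f₂ ∧
        r f₁ ((Z₁ ∘ Z₂) (f + f₂) - (Z₁ ∘ Z₂) f)) ∧
    (∀ f₁ f f₂ : G, r f₁ f₂ →
      (Z₁ ∘ Z₂) (f₁ + f + f₂) =
        (Z₁ ∘ Z₂) (f₁ + f) - (Z₁ ∘ Z₂) f + (Z₁ ∘ Z₂) (f₂ + f)) := by
  refine ⟨by simp [hZ₂0, hZ₁0], ?_, ?_⟩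
  · intro f f₁ f₂ h
    constructor
    · have h2 := (hZ₂caus f f₁ f₂ h).1
      have h1 := (hZ₁caus (Z₂ f) _ _ h2).1
      have : Z₂ f + (Z₂ (f + f₁) - Z₂ f) = Z₂ (f + f₁) := by abel
      rwa [this] at h1
    · have h2 := (hZ₂caus f f₁ f₂ h).2
      have h1 := (hZ₁caus (Z₂ f) _ _ h2).2
      have : Z₂ f + (Z₂ (f + f₂) - Z₂ f) = Z₂ (f + f₂) := by abel
      rwa [this] at h1
  · intro f₁ f f₂ h
    have hra : r (Z₂ (f₁ + f) - Z₂ f) f₂ := by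
      have := (hZ₂caus f f₁ f₂ h).1
      rwa [add_comm f f₁] at this
    have hrab : r (Z₂ (f₁ + f) - Z₂ f) (Z₂ (f₂ + f) - Z₂ f) := by
      have := (hZ₂caus f (Z₂ (f₁ + f) - Z₂ f) f₂ hra).2
      rwa [add_comm f f₂] at this
    have hH := hZ₁H (Z₂ (f₁ + f) - Z₂ f) (Z₂ f) (Z₂ (f₂ + f) - Z₂ f) hrab
    rw [sub_add_cancel, sub_add_cancel] at hH
    have key : Z₂ (f₁ + f + f₂) = Z₂ (f₁ + f) + (Z₂ (f₂ + f) - Z₂ f) := by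
      rw [hZ₂H f₁ f f₂ h]; abel
    simpa [key] using hH
end

section
/- Let ⊣ be a binary relation on an abelian group G compatible with addition and containing 0 in every polar (g ⊣ 0 and 0 ⊣ g for all g). If S : G → U satisfies S(0)=1 and the noncommutative Hammerstein property, then for any fixed a ∈ G, the relative S-matrix S_a(b) := S(a)⁻¹·S(a+b) satisfies S_a(0)=1 and is causality multiplicative: S_a(b₁+b₂) = S_a(b₁)·S_a(b₂) whenever b₂ ⊣ b₁. -/
/-- The relative S-matrix S_a(b) = S(a)⁻¹·S(a+b) preserves the unit and is
causality multiplicative. -/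
theorem relative_S_matrix {G U : Type*} [AddCommGroup G] [Group U]
    (r : G → G → Prop)
    (h0L : ∀ g : G, r 0 g) (h0R : ∀ g : G, r g 0)
    (S : G → U) (h0 : S 0 = 1)
    (hH : ∀ f₁ f f₂ : G, r f₁ f₂ →
      S (f₁ + f + f₂) = S (f₂ + f) * (S f)⁻¹ * S (f + f₁))
    (a : G) :
    (S a)⁻¹ * S (a + 0) = 1 ∧
    ∀ b₁ b₂ : G, r b₂ b₁ →
      (S a)⁻¹ * S (a + (b₁ + b₂)) =
        ((S a)⁻¹ * S (a + b₁)) * ((S a)⁻¹ * S (a + b₂)) := by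
  refine ⟨by simp [h0], ?_⟩
  intro b₁ b₂ hr
  have key := hH b₂ a b₁ hr
  have : a + (b₁ + b₂) = b₂ + a + b₁ := by abel
  rw [this, key, add_comm b₁ a]
  group
end
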